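/- Let C be the multiplicative group of positive-real-valued differentiable functions on [0,1], and let ⋀²C = (C⊗C)/S²C be its exterior square over ℤ. Suppose f₁,…,f_m ∈ C take values in (0,1) and satisfy Σ_{t=1}^m f_t ∧ (1 - f_t) = 0 in ⋀²C. Then u ↦ Σ_{t=1}^m L(f_t(u)) is constant on [0,1], where L is the Rogers dilogarithm. -/

import Mathlib

open MeasureTheory Real TensorProduct

/-- The Euler dilogarithm `Li₂(x) = -∫₀ˣ log(1-y)/y dy`. -/
noncomputable def Li2 (x : ℝ) : ℝ := -∫ y in (0:ℝ)..x, Real.log (1 - y) / y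

/-- The Rogers dilogarithm. -/
noncomputable def RL (x : ℝ) : ℝ := Li2 x + (1/2) * Real.log x * Real.log (1 - x)

/-- The multiplicative abelian group of positive-valued differentiable real functions. -/
def PD : Type := {f : ℝ → ℝ // (∀ x, 0 < f x) ∧ Differentiable ℝ f}

noncomputable instance : CommGroup PD where
  mul f g := ⟨fun x => f.1 x * g.1 x,
    fun x => mul_pos (f.2.1 x) (g.2.1 x), f.2.2.mul g.2.2⟩
  one := ⟨fun _ => 1, fun _ => one_pos, differentiable_const 1⟩
  inv f := ⟨fun x => (f.1 x)⁻¹,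
    fun x => inv_pos.2 (f.2.1 x), f.2.2.inv fun x => (f.2.1 x).ne'⟩
  mul_assoc a b c := Subtype.ext (funext fun x => mul_assoc _ _ _)
  one_mul a := Subtype.ext (funext fun x => one_mul _)
  mul_one a := Subtype.ext (funext fun x => mul_one _)
  inv_mul_cancel a := Subtype.ext (funext fun x => inv_mul_cancel₀ (a.2.1 x).ne')
  mul_comm a b := Subtype.ext (funext fun x => mul_comm _ _)

/-- The symmetric subgroup `S²C` of `C ⊗ C`. -/
noncomputable def SymSub : AddSubgroup (TensorProduct ℤ (Additive PD) (Additive PD)) :=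
  AddSubgroup.closure {t | ∃ a b : Additive PD, t = a ⊗ₜ[ℤ] b + b ⊗ₜ[ℤ] a}

lemma neg_log_bound {y : ℝ} (h0 : 0 < y) (h1 : y < 1) : -Real.log (1 - y) ≤ y / (1 - y) := by
  have h : Real.log ((1 - y)⁻¹) ≤ (1 - y)⁻¹ - 1 :=
    Real.log_le_sub_one_of_pos (inv_pos.2 (by linarith))
  rw [Real.log_inv] at h
  have h2 : (1 - y)⁻¹ - 1 = y / (1 - y) := by
    have hne : (1:ℝ) - y ≠ 0 := by linarith
    field_simp
    ring
  linarith [h2 ▸ h]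

lemma li2_integrand_integrable {b : ℝ} (hb0 : 0 ≤ b) (hb1 : b < 1) :
    IntervalIntegrable (fun y => Real.log (1 - y) / y) volume 0 b := by
  apply IntervalIntegrable.mono_fun' (g := fun _ => 1 / (1 - b))
  · exact intervalIntegrable_const
  · apply Measurable.aestronglyMeasurable
    exact (Real.measurable_log.comp (measurable_const.sub measurable_id)).div measurable_id
  · rw [Set.uIoc_of_le hb0]
    refine (ae_restrict_iff' measurableSet_Ioc).2 (Filter.Eventually.of_forall ?_)
    intro y hy
    have hy0 : 0 < y := hy.1
    have hy1 : y < 1 := lt_of_le_of_lt hy.2 hb1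
    have hlog : Real.log (1 - y) ≤ 0 := Real.log_nonpos (by linarith) (by linarith)
    have h2 : -Real.log (1 - y) ≤ y / (1 - y) := neg_log_bound hy0 hy1
    have : ‖Real.log (1 - y) / y‖ = (-Real.log (1 - y)) / y := by
      rw [norm_div, Real.norm_eq_abs, Real.norm_eq_abs, abs_of_nonpos hlog, abs_of_pos hy0]
    show ‖Real.log (1 - y) / y‖ ≤ 1 / (1 - b)
    rw [this]
    have h3 : (-Real.log (1 - y)) / y ≤ (y / (1 - y)) / y := by gcongr
    have h4 : (y / (1 - y)) / y = 1 / (1 - y) := by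
      rw [div_div, mul_comm, ← div_div, div_self hy0.ne']
    have h5 : 1 / (1 - y) ≤ 1 / (1 - b) := by
      apply one_div_le_one_div_of_le (by linarith : (0:ℝ) < 1 - b) (by linarith [hy.2])
    calc (-Real.log (1 - y)) / y ≤ (y / (1 - y)) / y := h3
      _ = 1 / (1 - y) := h4
      _ ≤ 1 / (1 - b) := h5

lemma hasDerivAt_Li2 {x : ℝ} (h0 : 0 < x) (h1 : x < 1) :
    HasDerivAt Li2 (-(Real.log (1 - x) / x)) x := by
  have hint : IntervalIntegrable (fun y => Real.log (1 - y) / y) volume 0 x :=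
    li2_integrand_integrable h0.le h1
  have hmeas : StronglyMeasurableAtFilter (fun y => Real.log (1 - y) / y) (nhds x) :=
    ((Real.measurable_log.comp (measurable_const.sub measurable_id)).div
      measurable_id).stronglyMeasurable.stronglyMeasurableAtFilter
  have hcont : ContinuousAt (fun y => Real.log (1 - y) / y) x := by
    apply ContinuousAt.div
    · exact (Real.continuousAt_log (by linarith)).comp (by fun_prop)
    · exact continuousAt_id
    · exact h0.ne'
  have := intervalIntegral.integral_hasDerivAt_right hint hmeas hcont
  exact this.neg

lemma hasDerivAt_RL {x : ℝ} (h0 : 0 < x) (h1 : x < 1) :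
    HasDerivAt RL (-(1/2) * (Real.log (1 - x) / x + Real.log x / (1 - x))) x := by
  have hx1 : (0:ℝ) < 1 - x := by linarith
  have hlogx : HasDerivAt Real.log x⁻¹ x := Real.hasDerivAt_log h0.ne'
  have hsub : HasDerivAt (fun y : ℝ => 1 - y) (-1) x := by
    simpa using (hasDerivAt_id x).const_sub 1
  have hlog1x : HasDerivAt (fun y : ℝ => Real.log (1 - y)) (-(1 - x)⁻¹) x := by
    have := (Real.hasDerivAt_log hx1.ne').comp x hsub
    rw [show -(1 - x)⁻¹ = (1 - x)⁻¹ * -1 by ring]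
    exact this
  have hprod : HasDerivAt (fun y : ℝ => (1/2) * Real.log y * Real.log (1 - y))
      ((1/2) * x⁻¹ * Real.log (1 - x) + (1/2) * Real.log x * (-(1 - x)⁻¹)) x := by
    exact ((hlogx.const_mul (1/2)).mul hlog1x)
  have := (hasDerivAt_Li2 h0 h1).fun_add hprod
  rw [show -(1/2) * (Real.log (1 - x) / x + Real.log x / (1 - x)) = -(Real.log (1 - x) / x)
    + ((1/2) * x⁻¹ * Real.log (1 - x) + (1/2) * Real.log x * (-(1 - x)⁻¹)) by ring]
  exact this

lemma hasDerivAt_logcomp (a : PD) (u : ℝ) :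
    HasDerivAt (fun x => Real.log (a.1 x)) (deriv a.1 u / a.1 u) u :=
  (a.2.2.differentiableAt.hasDerivAt).log (a.2.1 u).ne'

noncomputable def lam (u : ℝ) : Additive PD →+ ℝ where
  toFun a := Real.log ((Additive.toMul a).1 u)
  map_zero' := by
    show Real.log ((1 : PD).1 u) = 0
    rw [show (1 : PD).1 u = 1 from rfl, Real.log_one]
  map_add' a b := by
    show Real.log ((Additive.toMul a * Additive.toMul b).1 u) = _
    rw [show (Additive.toMul a * Additive.toMul b).1 u
        = (Additive.toMul a).1 u * (Additive.toMul b).1 u from rfl,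
      Real.log_mul ((Additive.toMul a).2.1 u).ne' ((Additive.toMul b).2.1 u).ne']

noncomputable def mu (u : ℝ) : Additive PD →+ ℝ where
  toFun a := deriv (fun x => Real.log ((Additive.toMul a).1 x)) u
  map_zero' := by
    show deriv (fun x => Real.log ((1 : PD).1 x)) u = 0
    have : (fun x : ℝ => Real.log ((1 : PD).1 x)) = fun _ => 0 := by
      funext x; rw [show (1 : PD).1 x = 1 from rfl, Real.log_one]
    rw [this, deriv_const]
  map_add' a b := by
    have ha := hasDerivAt_logcomp (Additive.toMul a) u
    have hb := hasDerivAt_logcomp (Additive.toMul b) u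
    show deriv (fun x => Real.log ((Additive.toMul a * Additive.toMul b).1 x)) u
        = deriv (fun x => Real.log ((Additive.toMul a).1 x)) u
          + deriv (fun x => Real.log ((Additive.toMul b).1 x)) u
    have key : (fun x => Real.log ((Additive.toMul a * Additive.toMul b).1 x))
        = fun x => Real.log ((Additive.toMul a).1 x) + Real.log ((Additive.toMul b).1 x) := by
      funext x
      rw [show (Additive.toMul a * Additive.toMul b).1 x
          = (Additive.toMul a).1 x * (Additive.toMul b).1 x from rfl,
        Real.log_mul ((Additive.toMul a).2.1 x).ne' ((Additive.toMul b).2.1 x).ne']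
    rw [key, (ha.fun_add hb).deriv, ha.deriv, hb.deriv]

noncomputable def Bmap (u : ℝ) : Additive PD →ₗ[ℤ] Additive PD →ₗ[ℤ] ℝ :=
  LinearMap.mk₂ ℤ (fun a b => lam u a * mu u b - lam u b * mu u a)
    (fun a a' b => by simp only [map_add]; ring)
    (fun c a b => by simp only [map_zsmul, zsmul_eq_mul]; push_cast; ring)
    (fun a b b' => by simp only [map_add]; ring)
    (fun c a b => by simp only [map_zsmul, zsmul_eq_mul]; push_cast; ring)

lemma phi_symsub (u : ℝ) {x : TensorProduct ℤ (Additive PD) (Additive PD)}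
    (hx : x ∈ SymSub) : TensorProduct.lift (Bmap u) x = 0 := by
  refine AddSubgroup.closure_induction ?_ ?_ ?_ ?_ hx
  · rintro t ⟨a, b, rfl⟩
    simp only [map_add, TensorProduct.lift.tmul, Bmap, LinearMap.mk₂_apply]
    ring
  · simp
  · intro x y _ _ hx hy
    simp [map_add, hx, hy]
  · intro x _ hx
    simp [map_neg, hx]


theorem rogers_constancy
    (m : ℕ) (f g : Fin m → PD)
    (hf1 : ∀ t, ∀ x : ℝ, (f t).1 x < 1)
    (hg : ∀ t, ∀ x : ℝ, (g t).1 x = 1 - (f t).1 x)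
    (hwedge : QuotientAddGroup.mk' SymSub
      (∑ t, (Additive.ofMul (f t)) ⊗ₜ[ℤ] (Additive.ofMul (g t))) = 0) :
    ∀ u ∈ Set.Icc (0:ℝ) 1, ∀ v ∈ Set.Icc (0:ℝ) 1,
      ∑ t, RL ((f t).1 u) = ∑ t, RL ((f t).1 v) := by
  intro u _ v _
  have hmem : (∑ t, (Additive.ofMul (f t)) ⊗ₜ[ℤ] (Additive.ofMul (g t))) ∈ SymSub := by
    rwa [QuotientAddGroup.mk'_apply, QuotientAddGroup.eq_zero_iff] at hwedge
  -- the total derivative is zero at every point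
  have hF : ∀ w : ℝ, HasDerivAt (fun x => ∑ t, RL ((f t).1 x)) 0 w := by
    intro w
    have hfw : ∀ t, 0 < (f t).1 w := fun t => (f t).2.1 w
    have hgw : ∀ t, 0 < (g t).1 w := fun t => (g t).2.1 w
    have hders : ∀ t : Fin m, HasDerivAt (fun x => RL ((f t).1 x))
        (-(1/2) * (Real.log (1 - (f t).1 w) / (f t).1 w
          + Real.log ((f t).1 w) / (1 - (f t).1 w)) * deriv (f t).1 w) w := by
      intro t
      have hfd : HasDerivAt (f t).1 (deriv (f t).1 w) w :=
        (f t).2.2.differentiableAt.hasDerivAt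
      exact (hasDerivAt_RL (hfw t) (hf1 t w)).comp w hfd
    have hsum := HasDerivAt.fun_sum (fun t (_ : t ∈ Finset.univ) => hders t)
    have hzero : ∑ t : Fin m, (-(1/2) * (Real.log (1 - (f t).1 w) / (f t).1 w
        + Real.log ((f t).1 w) / (1 - (f t).1 w)) * deriv (f t).1 w) = 0 := by
      -- wedge identity evaluated at w
      have h0 := phi_symsub w hmem
      rw [map_sum] at h0
      simp only [TensorProduct.lift.tmul, Bmap, LinearMap.mk₂_apply] at h0
      -- identify lam and mu values
      have hlamf : ∀ t, lam w (Additive.ofMul (f t)) = Real.log ((f t).1 w) := fun t => rfl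
      have hlamg : ∀ t, lam w (Additive.ofMul (g t)) = Real.log ((g t).1 w) := fun t => rfl
      have hmuf : ∀ t, mu w (Additive.ofMul (f t)) = deriv (f t).1 w / (f t).1 w :=
        fun t => (hasDerivAt_logcomp (f t) w).deriv
      have hmug : ∀ t, mu w (Additive.ofMul (g t))
          = -(deriv (f t).1 w) / (g t).1 w := by
        intro t
        have hgfun : (g t).1 = fun x => 1 - (f t).1 x := funext fun x => hg t x
        have hgd : HasDerivAt (g t).1 (-(deriv (f t).1 w)) w := by
          rw [hgfun]
          simpa using ((f t).2.2.differentiableAt.hasDerivAt).const_sub 1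
        exact (hgd.log (hgw t).ne').deriv
      rw [Finset.sum_congr rfl (fun t _ => by
        rw [hlamf t, hlamg t, hmuf t, hmug t])] at h0
      calc ∑ t : Fin m, (-(1/2) * (Real.log (1 - (f t).1 w) / (f t).1 w
            + Real.log ((f t).1 w) / (1 - (f t).1 w)) * deriv (f t).1 w)
          = ∑ t : Fin m, (1/2) * (Real.log ((f t).1 w) * (-(deriv (f t).1 w) / (g t).1 w)
            - Real.log ((g t).1 w) * (deriv (f t).1 w / (f t).1 w)) := by
            refine Finset.sum_congr rfl fun t _ => ?_
            rw [← hg t w]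
            ring
        _ = (1/2) * ∑ t : Fin m, (Real.log ((f t).1 w) * (-(deriv (f t).1 w) / (g t).1 w)
            - Real.log ((g t).1 w) * (deriv (f t).1 w / (f t).1 w)) := by
            rw [Finset.mul_sum]
        _ = 0 := by rw [h0, mul_zero]
    rwa [hzero] at hsum
  have hdiff : Differentiable ℝ (fun x => ∑ t, RL ((f t).1 x)) :=
    fun x => (hF x).differentiableAt
  have hd0 : ∀ x, deriv (fun x => ∑ t, RL ((f t).1 x)) x = 0 := fun x => (hF x).deriv
  exact is_const_of_deriv_eq_zero hdiff hd0 u v
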